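/- Let λ, μ ∈ (0,∞) and T > 0. For all a, b, c, d ∈ [0,1] with a < b and c < d, one has the strict rearrangement inequality I_{1,T}(a,c) + I_{1,T}(b,d) < I_{1,T}(a,d) + I_{1,T}(b,c). -/

import Mathlib

noncomputable section

open MeasureTheory Real Filter

/-- Probability that an initially inactive edge is active at time `t`. -/
def p01 (lam mu t : ℝ) : ℝ := (lam - lam * Real.exp (-(t * (lam + mu)))) / (lam + mu)

/-- Probability that an initially active edge is active at time `t`. -/
def p11 (lam mu t : ℝ) : ℝ := (lam + mu * Real.exp (-(t * (lam + mu)))) / (lam + mu)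

/-- The cumulant-type function `J_{t,v}(u)`. -/
def Jfun (lam mu t v u : ℝ) : ℝ :=
  u * Real.log (1 - p11 lam mu t + Real.exp v * p11 lam mu t) +
  (1 - u) * Real.log (1 - p01 lam mu t + Real.exp v * p01 lam mu t)

/-- The one-step rate function `I_{1,t}(u,x) = sup_v [v x - J_{t,v}(u)]`. -/
def I1 (lam mu t u x : ℝ) : ℝ := ⨆ v : ℝ, (v * x - Jfun lam mu t v u)

set_option maxHeartbeats 1000000
namespace Rearr

/-- denominator -/
def Dd (p v : ℝ) : ℝ := 1 - p + Real.exp v * p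
/-- logistic-type derivative -/
def al (p v : ℝ) : ℝ := Real.exp v * p / Dd p v

lemma Dd_pos {p : ℝ} (hp : 0 < p) (hp1 : p < 1) (v : ℝ) : 0 < Dd p v := by
  have := Real.exp_pos v
  unfold Dd; nlinarith

lemma hasDerivAt_logD {p : ℝ} (hp : 0 < p) (hp1 : p < 1) (v : ℝ) :
    HasDerivAt (fun v => Real.log (Dd p v)) (al p v) v := by
  have h1 : HasDerivAt (fun v => Dd p v) (Real.exp v * p) v := by
    simpa [Dd] using ((Real.hasDerivAt_exp v).mul_const p).const_add (1 - p)
  simpa [al] using h1.log (Dd_pos hp hp1 v).ne'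

lemma al_pos {p : ℝ} (hp : 0 < p) (hp1 : p < 1) (v : ℝ) : 0 < al p v :=
  div_pos (by positivity) (Dd_pos hp hp1 v)

lemma al_lt_one {p : ℝ} (hp : 0 < p) (hp1 : p < 1) (v : ℝ) : al p v < 1 := by
  rw [al, div_lt_one (Dd_pos hp hp1 v)]
  unfold Dd; nlinarith

lemma al_mono {p : ℝ} (hp : 0 < p) (hp1 : p < 1) {v w : ℝ} (h : v ≤ w) :
    al p v ≤ al p w := by
  rw [al, al, div_le_div_iff₀ (Dd_pos hp hp1 v) (Dd_pos hp hp1 w)]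
  have h1 : Real.exp v ≤ Real.exp w := Real.exp_le_exp.2 h
  have h2 := Real.exp_pos v
  have h3 := Real.exp_pos w
  unfold Dd
  nlinarith [mul_nonneg (mul_nonneg h2.le hp.le) (sub_nonneg.2 hp1.le), mul_le_mul_of_nonneg_right h1 (mul_nonneg hp.le (sub_nonneg.2 hp1.le))]

lemma hasDerivAt_al {p : ℝ} (hp : 0 < p) (hp1 : p < 1) (v : ℝ) :
    HasDerivAt (al p) (al p v * (1 - al p v)) v := by
  have h1 : HasDerivAt (fun v => Real.exp v * p) (Real.exp v * p) v :=
    (Real.hasDerivAt_exp v).mul_const p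
  have h2 : HasDerivAt (fun v => Dd p v) (Real.exp v * p) v := by
    simpa [Dd] using ((Real.hasDerivAt_exp v).mul_const p).const_add (1 - p)
  have h3 : HasDerivAt (al p) ((Real.exp v * p * Dd p v - Real.exp v * p * (Real.exp v * p)) / Dd p v ^ 2) v :=
    h1.div h2 (Dd_pos hp hp1 v).ne'
  convert h3 using 1
  have hD := (Dd_pos hp hp1 v).ne'
  unfold al
  field_simp

/-- slope via MVT -/
lemma slope_mem {f φ : ℝ → ℝ} (hd : ∀ x, HasDerivAt f (φ x) x) {v w : ℝ} (hvw : v < w) :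
    ∃ ξ, v < ξ ∧ ξ < w ∧ f w - f v = φ ξ * (w - v) := by
  obtain ⟨c, hc, hc2⟩ := exists_hasDerivAt_eq_slope f φ hvw
    (fun x _ => (hd x).continuousAt.continuousWithinAt) (fun x _ => hd x)
  refine ⟨c, hc.1, hc.2, ?_⟩
  rw [hc2, div_mul_cancel₀]
  exact (sub_pos.2 hvw).ne'

lemma al_lip {p : ℝ} (hp : 0 < p) (hp1 : p < 1) {v w : ℝ} (h : v ≤ w) :
    al p w - al p v ≤ (w - v) / 4 := by
  rcases eq_or_lt_of_le h with rfl | hlt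
  · simp
  obtain ⟨ξ, _, _, hξ⟩ := slope_mem (hasDerivAt_al hp hp1) hlt
  have h0 := al_pos hp hp1 ξ
  have h1 := al_lt_one hp hp1 ξ
  nlinarith [sq_nonneg (al p ξ - 1/2)]

lemma al_sub_al {p q : ℝ} (hq : 0 < q) (hqp : q ≤ p) (hp1 : p < 1) (v : ℝ) :
    al p v - al q v = (p - q) * Real.exp v / (Dd p v * Dd q v) := by
  have hp : 0 < p := lt_of_lt_of_le hq hqp
  have hq1 : q < 1 := lt_of_le_of_lt hqp hp1
  have h1 := (Dd_pos hp hp1 v).ne'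
  have h2 := (Dd_pos hq hq1 v).ne'
  rw [al, al, div_sub_div _ _ h1 h2]
  congr 1
  unfold Dd; ring

lemma al_ge {p q : ℝ} (hq : 0 < q) (hqp : q ≤ p) (hp1 : p < 1) (v : ℝ) :
    al q v ≤ al p v := by
  have hp : 0 < p := lt_of_lt_of_le hq hqp
  have hq1 : q < 1 := lt_of_le_of_lt hqp hp1
  have := al_sub_al hq hqp hp1 v
  have h3 : 0 ≤ (p - q) * Real.exp v / (Dd p v * Dd q v) := by
    apply div_nonneg
    · have := Real.exp_pos v; nlinarith
    · exact (mul_pos (Dd_pos hp hp1 v) (Dd_pos hq hq1 v)).le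
  linarith

lemma logD_ge_left {p : ℝ} (hp : 0 < p) (hp1 : p < 1) (v : ℝ) :
    v + Real.log p ≤ Real.log (Dd p v) := by
  have h1 : Real.exp v * p ≤ Dd p v := by unfold Dd; nlinarith
  have h2 : Real.log (Real.exp v * p) = v + Real.log p := by
    rw [Real.log_mul (Real.exp_pos v).ne' hp.ne', Real.log_exp]
  rw [← h2]
  exact Real.log_le_log (by positivity) h1

lemma logD_ge_right {p : ℝ} (hp : 0 < p) (hp1 : p < 1) (v : ℝ) :
    Real.log (1 - p) ≤ Real.log (Dd p v) := by
  apply Real.log_le_log (by linarith)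
  unfold Dd
  have := Real.exp_pos v; nlinarith


section Jlevel

variable {p q : ℝ}

/-- abstract J -/
def Jab (p q v u : ℝ) : ℝ :=
  u * Real.log (Dd p v) + (1 - u) * Real.log (Dd q v)

/-- abstract F -/
def Fab (p q v u x : ℝ) : ℝ := v * x - Jab p q v u

/-- abstract I -/
def Iab (p q u x : ℝ) : ℝ := ⨆ v : ℝ, Fab p q v u x

/-- derivative of J in v -/
def ph (p q u v : ℝ) : ℝ := u * al p v + (1 - u) * al q v

/-- difference g = A - B -/
def gg (p q v : ℝ) : ℝ := Real.log (Dd p v) - Real.log (Dd q v)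

lemma hp' (hq : 0 < q) (hqp : q < p) : 0 < p := lt_trans hq hqp
lemma hq1' (hqp : q < p) (hp1 : p < 1) : q < 1 := lt_trans hqp hp1

variable (hq : 0 < q) (hqp : q < p) (hp1 : p < 1)
include hq hqp hp1

lemma hasDerivAt_Jab (u v : ℝ) :
    HasDerivAt (fun v => Jab p q v u) (ph p q u v) v := by
  have h1 := ((hasDerivAt_logD (hp' hq hqp) hp1 v).const_mul u)
  have h2 := ((hasDerivAt_logD hq (hq1' hqp hp1) v).const_mul (1 - u))
  exact h1.add h2

lemma ph_nonneg {u : ℝ} (hu : 0 ≤ u) (hu1 : u ≤ 1) (v : ℝ) : 0 ≤ ph p q u v := by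
  have h1 := (al_pos (hp' hq hqp) hp1 v).le
  have h2 := (al_pos hq (hq1' hqp hp1) v).le
  have : 0 ≤ 1 - u := by linarith
  unfold ph; positivity

lemma ph_le_one {u : ℝ} (hu : 0 ≤ u) (hu1 : u ≤ 1) (v : ℝ) : ph p q u v ≤ 1 := by
  have h1 := (al_lt_one (hp' hq hqp) hp1 v).le
  have h2 := (al_lt_one hq (hq1' hqp hp1) v).le
  unfold ph; nlinarith

lemma ph_mono {u : ℝ} (hu : 0 ≤ u) (hu1 : u ≤ 1) {v w : ℝ} (h : v ≤ w) :
    ph p q u v ≤ ph p q u w := by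
  have h1 := al_mono (hp' hq hqp) hp1 h
  have h2 := al_mono hq (hq1' hqp hp1) h
  unfold ph; nlinarith

lemma ph_lip {u : ℝ} (hu : 0 ≤ u) (hu1 : u ≤ 1) {v w : ℝ} (h : v ≤ w) :
    ph p q u w - ph p q u v ≤ (w - v) / 4 := by
  have h1 := al_lip (hp' hq hqp) hp1 h
  have h2 := al_lip hq (hq1' hqp hp1) h
  unfold ph; nlinarith

lemma ph_mono_u {u u' : ℝ} (huu : u ≤ u') (v : ℝ) :
    ph p q u v ≤ ph p q u' v := by
  have h1 := al_ge hq hqp.le hp1 v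
  unfold ph; nlinarith

/-- gradient inequality, lower -/
lemma Jab_slope_lower {u : ℝ} (hu : 0 ≤ u) (hu1 : u ≤ 1) {v w : ℝ} (h : v ≤ w) :
    ph p q u v * (w - v) ≤ Jab p q w u - Jab p q v u := by
  rcases eq_or_lt_of_le h with rfl | hlt
  · simp
  obtain ⟨ξ, hξ1, hξ2, hξ3⟩ := slope_mem (f := fun v => Jab p q v u)
    (fun x => hasDerivAt_Jab hq hqp hp1 u x) hlt
  rw [hξ3]
  have := ph_mono hq hqp hp1 hu hu1 hξ1.le
  nlinarith

/-- gradient inequality, upper -/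
lemma Jab_slope_upper {u : ℝ} (hu : 0 ≤ u) (hu1 : u ≤ 1) {v w : ℝ} (h : v ≤ w) :
    Jab p q w u - Jab p q v u ≤ ph p q u w * (w - v) := by
  rcases eq_or_lt_of_le h with rfl | hlt
  · simp
  obtain ⟨ξ, hξ1, hξ2, hξ3⟩ := slope_mem (f := fun v => Jab p q v u)
    (fun x => hasDerivAt_Jab hq hqp hp1 u x) hlt
  rw [hξ3]
  have := ph_mono hq hqp hp1 hu hu1 hξ2.le
  nlinarith

lemma Jab_ge1 {u : ℝ} (hu : 0 ≤ u) (hu1 : u ≤ 1) (v : ℝ) :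
    v + (u * Real.log p + (1 - u) * Real.log q) ≤ Jab p q v u := by
  have h1 := logD_ge_left (hp' hq hqp) hp1 v
  have h2 := logD_ge_left hq (hq1' hqp hp1) v
  unfold Jab; nlinarith

lemma Jab_ge2 {u : ℝ} (hu : 0 ≤ u) (hu1 : u ≤ 1) (v : ℝ) :
    u * Real.log (1 - p) + (1 - u) * Real.log (1 - q) ≤ Jab p q v u := by
  have h1 := logD_ge_right (hp' hq hqp) hp1 v
  have h2 := logD_ge_right hq (hq1' hqp hp1) v
  unfold Jab; nlinarith

lemma Fab_bddAbove {u x : ℝ} (hu : 0 ≤ u) (hu1 : u ≤ 1) (hx : 0 ≤ x) (hx1 : x ≤ 1) :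
    BddAbove (Set.range fun v => Fab p q v u x) := by
  refine ⟨max (-(u * Real.log p + (1 - u) * Real.log q))
    (-(u * Real.log (1 - p) + (1 - u) * Real.log (1 - q))), ?_⟩
  rintro y ⟨v, rfl⟩
  rcases le_or_gt 0 v with hv | hv
  · have h1 := Jab_ge1 hq hqp hp1 hu hu1 v
    have : Fab p q v u x ≤ -(u * Real.log p + (1 - u) * Real.log q) := by
      unfold Fab; nlinarith
    exact le_trans this (le_max_left _ _)
  · have h1 := Jab_ge2 hq hqp hp1 hu hu1 v
    have : Fab p q v u x ≤ -(u * Real.log (1 - p) + (1 - u) * Real.log (1 - q)) := by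
      unfold Fab; nlinarith
    exact le_trans this (le_max_right _ _)

lemma Fab_le_Iab {u x : ℝ} (hu : 0 ≤ u) (hu1 : u ≤ 1) (hx : 0 ≤ x) (hx1 : x ≤ 1) (v : ℝ) :
    Fab p q v u x ≤ Iab p q u x :=
  le_ciSup (Fab_bddAbove hq hqp hp1 hu hu1 hx hx1) v

lemma hasDerivAt_gg (v : ℝ) :
    HasDerivAt (gg p q) (al p v - al q v) v := by
  have h1 := hasDerivAt_logD (hp' hq hqp) hp1 v
  have h2 := hasDerivAt_logD hq (hq1' hqp hp1) v
  exact h1.sub h2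

lemma gg_mono {v w : ℝ} (h : v ≤ w) : gg p q v ≤ gg p q w := by
  rcases eq_or_lt_of_le h with rfl | hlt
  · exact le_rfl
  obtain ⟨ξ, _, _, hξ3⟩ := slope_mem (hasDerivAt_gg hq hqp hp1) hlt
  have := al_ge hq hqp.le hp1 ξ
  nlinarith

lemma gg_gap {R L η : ℝ} (hR : 0 ≤ R) (hη : 0 < η) (h1 : -R ≤ L) (h2 : L + η ≤ R) :
    η * ((p - q) * Real.exp (-(3 * R))) ≤ gg p q (L + η) - gg p q L := by
  obtain ⟨ξ, hξ1, hξ2, hξ3⟩ := slope_mem (hasDerivAt_gg hq hqp hp1) (by linarith : L < L + η)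
  rw [hξ3]
  have key : (p - q) * Real.exp (-(3 * R)) ≤ al p ξ - al q ξ := by
    rw [al_sub_al hq hqp.le hp1 ξ]
    have hDp : Dd p ξ ≤ Real.exp R := by
      have he : Real.exp ξ ≤ Real.exp R := Real.exp_le_exp.2 (by linarith)
      have h1R : (1:ℝ) ≤ Real.exp R := Real.one_le_exp hR
      have hp0 := hp' hq hqp
      unfold Dd; nlinarith
    have hDq : Dd q ξ ≤ Real.exp R := by
      have he : Real.exp ξ ≤ Real.exp R := Real.exp_le_exp.2 (by linarith)
      have h1R : (1:ℝ) ≤ Real.exp R := Real.one_le_exp hR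
      have hq1 := hq1' hqp hp1
      unfold Dd; nlinarith
    have heξ : Real.exp (-R) ≤ Real.exp ξ := Real.exp_le_exp.2 (by linarith)
    have hDppos := Dd_pos (hp' hq hqp) hp1 ξ
    have hDqpos := Dd_pos hq (hq1' hqp hp1) ξ
    have hpq : 0 < p - q := by linarith
    have hee : Real.exp (-(3 * R)) = Real.exp (-R) / (Real.exp R * Real.exp R) := by
      rw [← Real.exp_add, ← Real.exp_sub]; ring_nf
    calc (p - q) * Real.exp (-(3 * R))
        = (p - q) * Real.exp (-R) / (Real.exp R * Real.exp R) := by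
          rw [hee]; ring
      _ ≤ (p - q) * Real.exp ξ / (Dd p ξ * Dd q ξ) := by
          apply div_le_div₀ (by positivity) (by nlinarith) (by positivity)
          exact mul_le_mul hDp hDq hDqpos.le (Real.exp_pos R).le
  nlinarith


end Jlevel

section Main

variable {p q a b c d : ℝ}
variable (hq : 0 < q) (hqp : q < p) (hp1 : p < 1)
variable (ha0 : 0 ≤ a) (hb1 : b ≤ 1) (hc0 : 0 ≤ c) (hd1 : d ≤ 1)
variable (hab : a < b) (hcd : c < d)
include hq hqp hp1 ha0 hb1 hc0 hd1 hab hcd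

/-- diagonal gap lemma -/
lemma diag_gap (v : ℝ) :
    Fab p q v a d + Fab p q v b c ≤ Iab p q a d + Iab p q b c - (d - c)^2 / 2 := by
  have ha1 : a ≤ 1 := by linarith
  have hb0 : 0 ≤ b := by linarith
  have hc1 : c ≤ 1 := by linarith
  have hd0 : 0 ≤ d := by linarith
  set ε := d - c with hε_def
  have hε : 0 < ε := by simp [hε_def]; linarith
  -- upper slope at (a, d), moving up by ε
  have h1 : Jab p q (v + ε) a - Jab p q v a ≤ ph p q a (v + ε) * ε := by
    have := Jab_slope_upper hq hqp hp1 ha0 ha1 (by linarith : v ≤ v + ε)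
    simpa using this
  -- lower slope at (b, c), moving down by ε
  have h2 : ph p q b (v - ε) * ε ≤ Jab p q v b - Jab p q (v - ε) b := by
    have := Jab_slope_lower hq hqp hp1 hb0 hb1 (by linarith : v - ε ≤ v)
    simpa using this
  -- Lipschitz + monotone in u
  have h3 : ph p q a (v + ε) ≤ ph p q b (v - ε) + ε / 2 := by
    have hl := ph_lip hq hqp hp1 ha0 ha1 (by linarith : v - ε ≤ v + ε)
    have hm := ph_mono_u hq hqp hp1 hab.le (v - ε)
    have : v + ε - (v - ε) = 2 * ε := by ring
    rw [this] at hl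
    linarith
  have key : Fab p q v a d + Fab p q v b c + ε^2 / 2 ≤
      Fab p q (v + ε) a d + Fab p q (v - ε) b c := by
    have e1 : Fab p q (v + ε) a d - Fab p q v a d
        = ε * d - (Jab p q (v + ε) a - Jab p q v a) := by unfold Fab; ring
    have e2 : Fab p q (v - ε) b c - Fab p q v b c
        = -(ε * c) + (Jab p q v b - Jab p q (v - ε) b) := by unfold Fab; ring
    nlinarith
  have i1 := Fab_le_Iab hq hqp hp1 ha0 ha1 hd0 hd1 (v + ε)
  have i2 := Fab_le_Iab hq hqp hp1 hb0 hb1 hc0 hc1 (v - ε)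
  calc Fab p q v a d + Fab p q v b c
      ≤ Fab p q (v + ε) a d + Fab p q (v - ε) b c - ε^2/2 := by linarith
    _ ≤ Iab p q a d + Iab p q b c - ε^2/2 := by linarith


lemma pointwise :
    ∃ ρ : ℝ, 0 < ρ ∧ ∀ v1 v2 : ℝ,
      Fab p q v1 a c + Fab p q v2 b d ≤ Iab p q a d + Iab p q b c - ρ := by
  have hp : 0 < p := hp' hq hqp
  have hq1 : q < 1 := hq1' hqp hp1
  have ha1 : a ≤ 1 := by linarith
  have hb0 : 0 ≤ b := by linarith
  have hc1 : c ≤ 1 := by linarith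
  have hd0 : 0 ≤ d := by linarith
  have hdpos : 0 < d := lt_of_le_of_lt hc0 hcd
  have hc1' : c < 1 := lt_of_lt_of_le hcd hd1
  have hη : 0 < (d - c)^2/4 := by nlinarith
  obtain ⟨Cb, hCb⟩ : ∃ x, x = -(b * Real.log p + (1 - b) * Real.log q) := ⟨_, rfl⟩
  obtain ⟨Ca, hCa⟩ : ∃ x, x = -(a * Real.log (1 - p) + (1 - a) * Real.log (1 - q)) := ⟨_, rfl⟩
  obtain ⟨R₁, hR₁⟩ : ∃ x, x = max ((d - c)^2/4) ((Cb - Iab p q b c + 1)/(1 - c)) := ⟨_, rfl⟩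
  obtain ⟨R₂, hR₂⟩ : ∃ x, x = (d - c)^2/4 + max 0 ((Ca + 1 - Iab p q a d)/d) := ⟨_, rfl⟩
  obtain ⟨R', hR'⟩ : ∃ x, x = max R₁ R₂ + (d - c)^2/4 := ⟨_, rfl⟩
  obtain ⟨κ, hκ⟩ : ∃ x, x = (p - q) * Real.exp (-(3 * R')) := ⟨_, rfl⟩
  have hR₁pos : 0 < R₁ := by rw [hR₁]; exact lt_of_lt_of_le hη (le_max_left _ _)
  have hR₂pos : 0 < R₂ := by
    have := le_max_left (0:ℝ) ((Ca + 1 - Iab p q a d)/d); linarith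
  have hR'0 : (0:ℝ) ≤ R' := by
    have := le_max_left R₁ R₂; linarith
  have hκpos : 0 < κ := by rw [hκ]; exact mul_pos (by linarith) (Real.exp_pos _)
  obtain ⟨ρ, hρdef⟩ : ∃ x, x = min (min ((d - c) * ((d - c)^2/4)) ((d - c)^2/4))
    (min 1 ((b - a) * ((d - c)^2/4) * κ)) := ⟨_, rfl⟩
  have hρpos : 0 < ρ := by
    rw [hρdef]
    refine lt_min (lt_min ?_ ?_) (lt_min one_pos ?_)
    · nlinarith
    · exact hη
    · have : 0 < b - a := by linarith
      positivity
  have hρ1 : ρ ≤ (d - c) * ((d - c)^2/4) := by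
    rw [hρdef]; exact le_trans (min_le_left _ _) (min_le_left _ _)
  have hρ2 : ρ ≤ (d - c)^2/4 := by
    rw [hρdef]; exact le_trans (min_le_left _ _) (min_le_right _ _)
  have hρ3 : ρ ≤ 1 := by
    rw [hρdef]; exact le_trans (min_le_right _ _) (min_le_left _ _)
  have hρ4 : ρ ≤ (b - a) * ((d - c)^2/4) * κ := by
    rw [hρdef]; exact le_trans (min_le_right _ _) (min_le_right _ _)
  have hIad : ∀ v, Fab p q v a d ≤ Iab p q a d :=
    fun v => Fab_le_Iab hq hqp hp1 ha0 ha1 hd0 hd1 v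
  have hIbc : ∀ v, Fab p q v b c ≤ Iab p q b c :=
    fun v => Fab_le_Iab hq hqp hp1 hb0 hb1 hc0 hc1 v
  refine ⟨ρ, hρpos, fun v1 v2 => ?_⟩
  rcases le_or_gt v2 v1 with h21 | h12
  · -- v2 ≤ v1
    have id1 : Fab p q v1 a c + Fab p q v2 b d
        = Fab p q v1 a d + Fab p q v2 b c + (v2 - v1) * (d - c) := by
      unfold Fab; ring
    rcases le_or_gt ((d - c)^2/4) (v1 - v2) with hfar | hnear
    · have h1 := hIad v1
      have h2 := hIbc v2
      have hkey : (v2 - v1) * (d - c) ≤ -((d - c) * ((d - c)^2/4)) := by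
        have hm := mul_le_mul_of_nonneg_right hfar (by linarith : (0:ℝ) ≤ d - c)
        have e1 : (v2 - v1) * (d - c) = -((v1 - v2) * (d - c)) := by ring
        have e2 : (d - c) * ((d - c)^2/4) = (d - c)^2/4 * (d - c) := by ring
        linarith
      linarith
    · have hs := Jab_slope_upper hq hqp hp1 hb0 hb1 h21
      have hph1 := ph_le_one hq hqp hp1 hb0 hb1 v1
      have hlip : Fab p q v2 b c ≤ Fab p q v1 b c + (v1 - v2) := by
        have h1 : ph p q b v1 * (v1 - v2) ≤ 1 * (v1 - v2) :=
          mul_le_mul_of_nonneg_right hph1 (by linarith)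
        have h2 : (v2 - v1) * c ≤ 0 := mul_nonpos_of_nonpos_of_nonneg (by linarith) hc0
        have e : Fab p q v2 b c
            = Fab p q v1 b c + (v2 - v1) * c + (Jab p q v1 b - Jab p q v2 b) := by
          unfold Fab; ring
        linarith
      have hdg := diag_gap hq hqp hp1 ha0 hb1 hc0 hd1 hab hcd v1
      have hneg : (v2 - v1) * (d - c) ≤ 0 :=
        mul_nonpos_of_nonpos_of_nonneg (by linarith) (by linarith)
      linarith
  · -- v1 < v2
    have id2 : Fab p q v1 a c + Fab p q v2 b d
        = Fab p q v2 a d + Fab p q v1 b c + (b - a) * (gg p q v1 - gg p q v2) := by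
      unfold Fab Jab gg; ring
    have hgmono : gg p q v1 ≤ gg p q v2 := gg_mono hq hqp hp1 h12.le
    have hgneg : (b - a) * (gg p q v1 - gg p q v2) ≤ 0 :=
      mul_nonpos_of_nonneg_of_nonpos (by linarith) (by linarith)
    rcases lt_or_ge (v2 - v1) ((d - c)^2/4) with hnear | hfar
    · have hs := Jab_slope_upper hq hqp hp1 hb0 hb1 h12.le
      have hph1 := ph_le_one hq hqp hp1 hb0 hb1 v2
      have hlip : Fab p q v1 b c ≤ Fab p q v2 b c + (v2 - v1) := by
        have h1 : ph p q b v2 * (v2 - v1) ≤ 1 * (v2 - v1) :=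
          mul_le_mul_of_nonneg_right hph1 (by linarith)
        have h2 : (v1 - v2) * c ≤ 0 := mul_nonpos_of_nonpos_of_nonneg (by linarith) hc0
        have e : Fab p q v1 b c
            = Fab p q v2 b c + (v1 - v2) * c + (Jab p q v2 b - Jab p q v1 b) := by
          unfold Fab; ring
        linarith
      have hdg := diag_gap hq hqp hp1 ha0 hb1 hc0 hd1 hab hcd v2
      linarith
    · rcases le_or_gt R₁ v1 with htail1 | hmid1
      · -- right tail
        have hJ := Jab_ge1 hq hqp hp1 hb0 hb1 v1
        have hc1'' : (0:ℝ) < 1 - c := by linarith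
        have hdiv : (Cb - Iab p q b c + 1)/(1 - c) ≤ v1 :=
          le_trans (hR₁ ▸ le_max_right ((d - c)^2/4) ((Cb - Iab p q b c + 1)/(1 - c))) htail1
        have hmul : Cb - Iab p q b c + 1 ≤ v1 * (1 - c) := (div_le_iff₀ hc1'').1 hdiv
        have hF : Fab p q v1 b c ≤ Iab p q b c - 1 := by
          have e : Fab p q v1 b c = v1 * c - Jab p q v1 b := rfl
          have e2 : v1 * (1 - c) = v1 - v1 * c := by ring
          linarith
        have := hIad v2
        linarith
      · rcases le_or_gt v2 (-R₂ + (d - c)^2/4) with htail2 | hmid2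
        · -- left tail
          have hJ := Jab_ge2 hq hqp hp1 ha0 ha1 v2
          have hX : v2 ≤ -((Ca + 1 - Iab p q a d)/d) := by
            have h := le_max_right (0:ℝ) ((Ca + 1 - Iab p q a d)/d)
            have : -R₂ + (d - c)^2/4 = -(max 0 ((Ca + 1 - Iab p q a d)/d)) := by
              rw [hR₂]; ring
            linarith [htail2.trans_eq this]
          have hmul : v2 * d ≤ -(Ca + 1 - Iab p q a d) := by
            have h1 : v2 * d ≤ -((Ca + 1 - Iab p q a d)/d) * d :=
              mul_le_mul_of_nonneg_right hX hd0
            have h2 : ((Ca + 1 - Iab p q a d)/d) * d = Ca + 1 - Iab p q a d :=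
              div_mul_cancel₀ _ hdpos.ne'
            have h3 : -((Ca + 1 - Iab p q a d)/d) * d = -(Ca + 1 - Iab p q a d) := by
              rw [neg_mul, h2]
            linarith
          have hF : Fab p q v2 a d ≤ Iab p q a d - 1 := by
            have e : Fab p q v2 a d = v2 * d - Jab p q v2 a := rfl
            linarith
          have := hIbc v1
          linarith
        · -- middle
          obtain ⟨L, hL⟩ : ∃ x, x = max v1 (-R₂) := ⟨_, rfl⟩
          have hLv1 : v1 ≤ L := by rw [hL]; exact le_max_left _ _
          have hLlow : -R₂ ≤ L := by rw [hL]; exact le_max_right _ _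
          have hLup : L + (d - c)^2/4 ≤ v2 := by
            have : max v1 (-R₂) ≤ v2 - (d - c)^2/4 := max_le (by linarith) (by linarith)
            rw [hL]; linarith
          have hbounds1 : -R' ≤ L := by
            have h := le_max_right R₁ R₂
            linarith
          have hbounds2 : L + (d - c)^2/4 ≤ R' := by
            have h1 : L ≤ R₁ := by rw [hL]; exact max_le hmid1.le (by linarith)
            have h2 : R₁ ≤ max R₁ R₂ := le_max_left _ _
            linarith
          have hgap := gg_gap hq hqp hp1 hR'0 hη hbounds1 hbounds2
          have hm1 := gg_mono hq hqp hp1 hLv1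
          have hm2 := gg_mono hq hqp hp1 hLup
          have hgg : (d - c)^2/4 * κ ≤ gg p q v2 - gg p q v1 := by
            rw [hκ]; linarith
          have h1 := hIad v2
          have h2 := hIbc v1
          have hfinal : (b - a) * (gg p q v1 - gg p q v2)
              ≤ -((b - a) * ((d - c)^2/4) * κ) := by
            have hm := mul_le_mul_of_nonneg_left hgg (by linarith : (0:ℝ) ≤ b - a)
            have e1 : (b - a) * (gg p q v1 - gg p q v2)
                = -((b - a) * (gg p q v2 - gg p q v1)) := by ring
            have e2 : (b - a) * ((d - c)^2/4) * κ = (b - a) * ((d - c)^2/4 * κ) := by ring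
            linarith
          linarith


lemma main_abs : Iab p q a c + Iab p q b d < Iab p q a d + Iab p q b c := by
  obtain ⟨ρ, hρpos, hpt⟩ := pointwise hq hqp hp1 ha0 hb1 hc0 hd1 hab hcd
  have h1 : (⨆ v1 : ℝ, Fab p q v1 a c)
      ≤ (Iab p q a d + Iab p q b c - ρ) - Iab p q b d := by
    refine ciSup_le fun v1 => ?_
    have h2 : (⨆ v2 : ℝ, Fab p q v2 b d)
        ≤ (Iab p q a d + Iab p q b c - ρ) - Fab p q v1 a c := by
      refine ciSup_le fun v2 => ?_
      linarith [hpt v1 v2]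
    have h2' : Iab p q b d ≤ (Iab p q a d + Iab p q b c - ρ) - Fab p q v1 a c := h2
    linarith
  have h1' : Iab p q a c ≤ (Iab p q a d + Iab p q b c - ρ) - Iab p q b d := h1
  linarith

end Main
end Rearr


/-- Strict rearrangement inequality for the one-step rate function. -/
theorem stmt_11 (lam mu T : ℝ) (hlam : 0 < lam) (hmu : 0 < mu) (hT : 0 < T)
    (a b c d : ℝ) (ha : a ∈ Set.Icc (0:ℝ) 1) (hb : b ∈ Set.Icc (0:ℝ) 1)
    (hc : c ∈ Set.Icc (0:ℝ) 1) (hd : d ∈ Set.Icc (0:ℝ) 1)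
    (hab : a < b) (hcd : c < d) :
    I1 lam mu T a c + I1 lam mu T b d < I1 lam mu T a d + I1 lam mu T b c := by
  have hs : 0 < T * (lam + mu) := by positivity
  have hE1 : Real.exp (-(T * (lam + mu))) < 1 := by
    rw [Real.exp_lt_one_iff]
    linarith
  have hE0 : 0 < Real.exp (-(T * (lam + mu))) := Real.exp_pos _
  have hlm : 0 < lam + mu := by linarith
  have hQ : 0 < p01 lam mu T := by
    rw [p01]
    apply div_pos _ hlm
    nlinarith
  have hP1 : p11 lam mu T < 1 := by
    rw [p11, div_lt_one hlm]
    nlinarith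
  have hQP : p01 lam mu T < p11 lam mu T := by
    rw [p01, p11, div_lt_div_iff_of_pos_right hlm]
    nlinarith
  have key := Rearr.main_abs hQ hQP hP1 ha.1 hb.2 hc.1 hd.2 hab hcd
  exact key
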